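/- arXiv:1601.06274 — 7 statements merged into one kernel-verified Lean document; each statement's English description precedes it below -/
import Mathlib

section
/- (Monotonicity of the dual minorize-maximize step.) Let f, g be energy functions and λ⁰ a modular function, and define D¹(λ) = min over labelings x of (f(x) + ⟨λ, x⟩) and D²(λ) = min over labelings x of (g(x) − ⟨λ, x⟩). Let x⁰ minimize x ↦ f(x) + ⟨λ⁰, x⟩, and let f̲ be a modular minorant of f exact at x⁰ such that ⟨f̲, x⟩ + ⟨λ⁰, x⟩ ≥ D¹(λ⁰) for every labeling x. Then for λ¹ = −f̲ the dual objective does not decrease: D¹(λ¹) + D²(λ¹) ≥ D¹(λ⁰) + D²(λ⁰). -/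
/-- Monotonicity of the dual minorize-maximize step: replacing `λ⁰` by
`λ¹ = −f̲` does not decrease the dual objective `D¹(λ) + D²(λ)`. -/
theorem dual_mm_monotone {V L : Type*} [Fintype V] [DecidableEq V] [Fintype L]
    [Nonempty V] [Nonempty L]
    (f g : (V → L) → ℝ) (lam0 fl : V → L → ℝ) (x0 : V → L)
    (hx0 : ∀ x : V → L, f x0 + ∑ i, lam0 i (x0 i) ≤ f x + ∑ i, lam0 i (x i))
    (hminor : ∀ x : V → L, ∑ i, fl i (x i) ≤ f x)
    (hexact : ∑ i, fl i (x0 i) = f x0)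
    (hdom : ∀ x : V → L,
      Finset.univ.inf' Finset.univ_nonempty (fun y : V → L => f y + ∑ i, lam0 i (y i)) ≤
        ∑ i, fl i (x i) + ∑ i, lam0 i (x i)) :
    Finset.univ.inf' Finset.univ_nonempty
        (fun y : V → L => f y + ∑ i, lam0 i (y i)) +
      Finset.univ.inf' Finset.univ_nonempty
        (fun y : V → L => g y - ∑ i, lam0 i (y i)) ≤
      Finset.univ.inf' Finset.univ_nonempty
          (fun y : V → L => f y + ∑ i, (-fl i (y i))) +
        Finset.univ.inf' Finset.univ_nonempty
          (fun y : V → L => g y - ∑ i, (-fl i (y i))) := by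
  have hC : (0:ℝ) ≤ Finset.univ.inf' Finset.univ_nonempty
      (fun y : V → L => f y + ∑ i, (-fl i (y i))) := by
    apply Finset.le_inf'
    intro y _
    have := hminor y
    simp only [Finset.sum_neg_distrib]
    linarith
  have hD : Finset.univ.inf' Finset.univ_nonempty
        (fun y : V → L => f y + ∑ i, lam0 i (y i)) +
      Finset.univ.inf' Finset.univ_nonempty
        (fun y : V → L => g y - ∑ i, lam0 i (y i)) ≤
      Finset.univ.inf' Finset.univ_nonempty
        (fun y : V → L => g y - ∑ i, (-fl i (y i))) := by
    apply Finset.le_inf'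
    intro y _
    have h1 := hdom y
    have h2 : Finset.univ.inf' Finset.univ_nonempty
        (fun y : V → L => g y - ∑ i, lam0 i (y i)) ≤ g y - ∑ i, lam0 i (y i) :=
      Finset.inf'_le _ (Finset.mem_univ y)
    simp only [Finset.sum_neg_distrib]
    linarith
  linarith
end

section
/- Let f be an energy function and λ a maximal modular minorant of f, i.e. a modular minorant such that there exists no modular minorant λ' of f with λ' i s ≥ λ i s for all i ∈ V, s ∈ L and ⟨λ', x̂⟩ > ⟨λ, x̂⟩ for some labeling x̂. Then all min-marginals of f − λ are identically zero: for every node i ∈ V and every label s ∈ L, the minimum of f(x) − ⟨λ, x⟩ over labelings x with x i = s equals 0. -/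
/-- For a maximal modular minorant `λ` of `f`, all min-marginals of `f − λ` are
identically zero: for every node `i` and label `s`, the minimum of `f(x) − ⟨λ, x⟩` over
labelings `x` with `x i = s` equals `0`. -/
theorem maximal_minorant_zero_minmarginals {V L : Type*} [Fintype V] [Fintype L]
    [Nonempty V] [Nonempty L]
    (f : (V → L) → ℝ) (lam : V → L → ℝ)
    (hminor : ∀ x : V → L, ∑ i, lam i (x i) ≤ f x)
    (hmax : ¬ ∃ lam' : V → L → ℝ,
      (∀ x : V → L, ∑ i, lam' i (x i) ≤ f x) ∧
      (∀ i s, lam i s ≤ lam' i s) ∧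
      (∃ xhat : V → L, ∑ i, lam i (xhat i) < ∑ i, lam' i (xhat i))) :
    ∀ (i : V) (s : L),
      IsLeast {y : ℝ | ∃ x : V → L, x i = s ∧ y = f x - ∑ j, lam j (x j)} 0 := by
  classical
  intro i s
  constructor
  · -- membership: there is x with x i = s and f x = ∑ λ
    by_contra hmem
    -- the finset of labelings with x i = s
    set T : Finset (V → L) := Finset.univ.filter (fun x => x i = s) with hT
    have hTne : T.Nonempty := by
      refine ⟨Function.update (fun _ => Classical.arbitrary L) i s, ?_⟩
      simp [hT, Function.update_self]
    obtain ⟨x₀, hx₀T, hx₀⟩ := T.exists_mem_eq_inf' hTne (fun x => f x - ∑ j, lam j (x j))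
    have hx₀i : x₀ i = s := by simpa [hT] using hx₀T
    set ε : ℝ := f x₀ - ∑ j, lam j (x₀ j) with hε
    have hεnonneg : 0 ≤ ε := by
      have := hminor x₀
      rw [hε]; linarith
    have hεpos : 0 < ε := by
      rcases lt_or_eq_of_le hεnonneg with h | h
      · exact h
      · exact absurd ⟨x₀, hx₀i, h.trans hε⟩ hmem
    -- build a better minorant
    apply hmax
    refine ⟨fun j t => lam j t + if j = i ∧ t = s then ε else 0, ?_, ?_, ?_⟩
    · intro x
      have hsum : ∑ j, (lam j (x j) + if j = i ∧ x j = s then ε else 0)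
          = (∑ j, lam j (x j)) + (if x i = s then ε else 0) := by
        rw [Finset.sum_add_distrib]
        congr 1
        have : ∀ j, (if j = i ∧ x j = s then ε else 0)
            = if j = i then (if x i = s then ε else 0) else 0 := by
          intro j
          by_cases hj : j = i
          · subst hj; simp
          · simp [hj]
        simp only [this]
        simp
      rw [hsum]
      by_cases hxi : x i = s
      · have hxT : x ∈ T := by simp [hT, hxi]
        have : ε ≤ f x - ∑ j, lam j (x j) := by
          rw [← hx₀]; exact Finset.inf'_le _ hxT
        simp only [hxi, if_true]
        linarith
      · simp only [hxi, if_false]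
        simpa using hminor x
    · intro j t
      by_cases h : j = i ∧ t = s <;> simp [h, le_of_lt hεpos]
    · refine ⟨x₀, ?_⟩
      have hsum : ∑ j, (lam j (x₀ j) + if j = i ∧ x₀ j = s then ε else 0)
          = (∑ j, lam j (x₀ j)) + ε := by
        rw [Finset.sum_add_distrib]
        congr 1
        have : ∀ j, (if j = i ∧ x₀ j = s then ε else 0)
            = if j = i then ε else 0 := by
          intro j
          by_cases hj : j = i
          · subst hj; simp [hx₀i]
          · simp [hj]
        simp only [this]
        simp
      rw [hsum]
      linarith
  · rintro y ⟨x, hxi, rfl⟩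
    have := hminor x
    linarith
end

section
/- (Min-marginal decomposition on a chain.) Let n ≥ 1, let L be a finite nonempty set, and let F(x) = ∑_{i=1}^{n} f_i(x_i) + ∑_{i=1}^{n−1} f_{i,i+1}(x_i, x_{i+1}) be a chain energy. Define left messages φ_1(s) = 0, φ_{i+1}(s) = min over t ∈ L of (φ_i(t) + f_i(t) + f_{i,i+1}(t, s)), and right messages ψ_n(s) = 0, ψ_i(s) = min over t ∈ L of (ψ_{i+1}(t) + f_{i+1}(t) + f_{i,i+1}(s, t)). Then for every node 1 ≤ i ≤ n and every label s ∈ L, the min-marginal of F at i and s satisfies: min over x : {1,…,n} → L with x_i = s of F(x) = f_i(s) + φ_i(s) + ψ_i(s). -/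
open Finset

section ChainAux

variable {L : Type*}

noncomputable def Pref (f : ℕ → L → ℝ) (p : ℕ → L → L → ℝ) (i : ℕ) (x : ℕ → L) : ℝ :=
  (∑ j ∈ range i, f (j + 1) (x (j + 1))) +
    ∑ j ∈ range (i - 1), p (j + 1) (x (j + 1)) (x (j + 2))

noncomputable def Suff (f : ℕ → L → ℝ) (p : ℕ → L → L → ℝ) (n i : ℕ) (x : ℕ → L) : ℝ :=
  (∑ j ∈ range (n - i), f (i + j + 1) (x (i + j + 1))) +
    ∑ j ∈ range (n - i), p (i + j) (x (i + j)) (x (i + j + 1))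

lemma Pref_congr (f : ℕ → L → ℝ) (p : ℕ → L → L → ℝ) (i : ℕ) {x y : ℕ → L}
    (h : ∀ k, 1 ≤ k → k ≤ i → x k = y k) : Pref f p i x = Pref f p i y := by
  unfold Pref
  congr 1
  · exact sum_congr rfl fun j hj => by
      simp only [mem_range] at hj
      rw [h (j + 1) (by omega) (by omega)]
  · exact sum_congr rfl fun j hj => by
      simp only [mem_range] at hj
      rw [h (j + 1) (by omega) (by omega), h (j + 2) (by omega) (by omega)]

lemma Suff_congr (f : ℕ → L → ℝ) (p : ℕ → L → L → ℝ) {n i : ℕ} (hi : i ≤ n) {x y : ℕ → L}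
    (h : ∀ k, i ≤ k → k ≤ n → x k = y k) : Suff f p n i x = Suff f p n i y := by
  unfold Suff
  congr 1
  · exact sum_congr rfl fun j hj => by
      simp only [mem_range] at hj
      rw [h (i + j + 1) (by omega) (by omega)]
  · exact sum_congr rfl fun j hj => by
      simp only [mem_range] at hj
      rw [h (i + j) (by omega) (by omega), h (i + j + 1) (by omega) (by omega)]

lemma Pref_one (f : ℕ → L → ℝ) (p : ℕ → L → L → ℝ) (x : ℕ → L) :
    Pref f p 1 x = f 1 (x 1) := by simp [Pref]

lemma Pref_succ (f : ℕ → L → ℝ) (p : ℕ → L → L → ℝ) {i : ℕ} (h : 1 ≤ i) (x : ℕ → L) :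
    Pref f p (i + 1) x = Pref f p i x + f (i + 1) (x (i + 1)) + p i (x i) (x (i + 1)) := by
  unfold Pref
  rw [show i + 1 - 1 = (i - 1) + 1 from by omega, sum_range_succ, sum_range_succ,
    show i - 1 + 1 = i from by omega, show i - 1 + 2 = i + 1 from by omega]
  ring

lemma Suff_self (f : ℕ → L → ℝ) (p : ℕ → L → L → ℝ) (n : ℕ) (x : ℕ → L) :
    Suff f p n n x = 0 := by simp [Suff]

lemma Suff_succ (f : ℕ → L → ℝ) (p : ℕ → L → L → ℝ) {n i : ℕ} (h : i < n) (x : ℕ → L) :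
    Suff f p n i x =
      f (i + 1) (x (i + 1)) + p i (x i) (x (i + 1)) + Suff f p n (i + 1) x := by
  unfold Suff
  rw [show n - i = (n - (i + 1)) + 1 from by omega, sum_range_succ', sum_range_succ']
  have A : (∑ j ∈ range (n - (i + 1)), f (i + (j + 1) + 1) (x (i + (j + 1) + 1)))
      = ∑ j ∈ range (n - (i + 1)), f (i + 1 + j + 1) (x (i + 1 + j + 1)) :=
    sum_congr rfl fun j _ => by rw [show i + (j + 1) = i + 1 + j from by omega]
  have B : (∑ j ∈ range (n - (i + 1)), p (i + (j + 1)) (x (i + (j + 1))) (x (i + (j + 1) + 1)))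
      = ∑ j ∈ range (n - (i + 1)), p (i + 1 + j) (x (i + 1 + j)) (x (i + 1 + j + 1)) :=
    sum_congr rfl fun j _ => by rw [show i + (j + 1) = i + 1 + j from by omega]
  rw [A, B]
  simp only [add_zero]
  ring

lemma energy_split (f : ℕ → L → ℝ) (p : ℕ → L → L → ℝ) {n i : ℕ} (h1 : 1 ≤ i) (hi : i ≤ n)
    (x : ℕ → L) :
    (∑ j ∈ range n, f (j + 1) (x (j + 1))) +
      (∑ j ∈ range (n - 1), p (j + 1) (x (j + 1)) (x (j + 2))) =
    Pref f p i x + Suff f p n i x := by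
  have e1 := Finset.sum_range_add (fun k => f (k + 1) (x (k + 1))) i (n - i)
  rw [show i + (n - i) = n from by omega] at e1
  have e2 := Finset.sum_range_add (fun k => p (k + 1) (x (k + 1)) (x (k + 2))) (i - 1) (n - i)
  rw [show (i - 1) + (n - i) = n - 1 from by omega] at e2
  rw [e1, e2]
  unfold Pref Suff
  have B : (∑ j ∈ range (n - i), p (i - 1 + j + 1) (x (i - 1 + j + 1)) (x (i - 1 + j + 2)))
      = ∑ j ∈ range (n - i), p (i + j) (x (i + j)) (x (i + j + 1)) :=
    sum_congr rfl fun j _ => by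
      rw [show i - 1 + j + 2 = i + j + 1 from by omega, show i - 1 + j + 1 = i + j from by omega]
  rw [B]
  ring

end ChainAux

section ChainMsg

variable {L : Type*} [Fintype L] [Nonempty L]

lemma phi_lb (n : ℕ) (f : ℕ → L → ℝ) (p : ℕ → L → L → ℝ) (phi : ℕ → L → ℝ)
    (hphi1 : ∀ s : L, phi 1 s = 0)
    (hphirec : ∀ i : ℕ, 1 ≤ i → i ≤ n - 1 → ∀ s : L,
      phi (i + 1) s =
        Finset.univ.inf' Finset.univ_nonempty (fun t : L => phi i t + f i t + p i t s)) :
    ∀ i, 1 ≤ i → i ≤ n → ∀ x : ℕ → L, f i (x i) + phi i (x i) ≤ Pref f p i x := by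
  intro i h1
  induction i, h1 using Nat.le_induction with
  | base => intro _ x; rw [Pref_one, hphi1]; simp
  | succ i h1 IH =>
    intro hin x
    have hIH := IH (by omega) x
    have hrec := hphirec i h1 (by omega) (x (i + 1))
    have hle : phi (i + 1) (x (i + 1)) ≤ phi i (x i) + f i (x i) + p i (x i) (x (i + 1)) := by
      rw [hrec]; exact Finset.inf'_le _ (Finset.mem_univ _)
    rw [Pref_succ f p h1]
    linarith

lemma phi_att (n : ℕ) (f : ℕ → L → ℝ) (p : ℕ → L → L → ℝ) (phi : ℕ → L → ℝ)
    (hphi1 : ∀ s : L, phi 1 s = 0)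
    (hphirec : ∀ i : ℕ, 1 ≤ i → i ≤ n - 1 → ∀ s : L,
      phi (i + 1) s =
        Finset.univ.inf' Finset.univ_nonempty (fun t : L => phi i t + f i t + p i t s)) :
    ∀ i, 1 ≤ i → i ≤ n → ∀ s : L, ∃ x : ℕ → L, x i = s ∧ Pref f p i x = f i s + phi i s := by
  intro i h1
  induction i, h1 using Nat.le_induction with
  | base =>
    intro _ s
    exact ⟨fun _ => s, rfl, by rw [Pref_one, hphi1]; ring⟩
  | succ i h1 IH =>
    intro hin s
    have hrec := hphirec i h1 (by omega) s
    obtain ⟨t, -, ht⟩ := Finset.exists_mem_eq_inf' (Finset.univ_nonempty)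
      (fun t : L => phi i t + f i t + p i t s)
    obtain ⟨x1, hx1i, hx1⟩ := IH (by omega) t
    refine ⟨fun k => if k = i + 1 then s else x1 k, by simp, ?_⟩
    have hco : Pref f p i (fun k => if k = i + 1 then s else x1 k) = Pref f p i x1 :=
      Pref_congr f p i fun k _ hk => by simp [show k ≠ i + 1 from by omega]
    rw [Pref_succ f p h1]
    simp only [hco, hx1]
    rw [hrec, ht]
    simp [show i ≠ i + 1 from by omega, hx1i]
    ring

lemma psi_lb (n : ℕ) (f : ℕ → L → ℝ) (p : ℕ → L → L → ℝ) (psi : ℕ → L → ℝ)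
    (hpsin : ∀ s : L, psi n s = 0)
    (hpsirec : ∀ i : ℕ, 1 ≤ i → i ≤ n - 1 → ∀ s : L,
      psi i s =
        Finset.univ.inf' Finset.univ_nonempty
          (fun t : L => psi (i + 1) t + f (i + 1) t + p i s t)) :
    ∀ d i, 1 ≤ i → i + d = n → ∀ x : ℕ → L, psi i (x i) ≤ Suff f p n i x := by
  intro d
  induction d with
  | zero =>
    intro i _ hd x
    have : i = n := by omega
    subst this
    rw [Suff_self, hpsin]
  | succ d IH =>
    intro i h1 hd x
    have hlt : i < n := by omega
    rw [Suff_succ f p hlt]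
    have hIH := IH (i + 1) (by omega) (by omega) x
    have hrec := hpsirec i h1 (by omega) (x i)
    have hle : psi i (x i) ≤ psi (i + 1) (x (i + 1)) + f (i + 1) (x (i + 1)) +
        p i (x i) (x (i + 1)) := by
      rw [hrec]; exact Finset.inf'_le _ (Finset.mem_univ _)
    linarith

lemma psi_att (n : ℕ) (f : ℕ → L → ℝ) (p : ℕ → L → L → ℝ) (psi : ℕ → L → ℝ)
    (hpsin : ∀ s : L, psi n s = 0)
    (hpsirec : ∀ i : ℕ, 1 ≤ i → i ≤ n - 1 → ∀ s : L,
      psi i s =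
        Finset.univ.inf' Finset.univ_nonempty
          (fun t : L => psi (i + 1) t + f (i + 1) t + p i s t)) :
    ∀ d i, 1 ≤ i → i + d = n → ∀ s : L, ∃ x : ℕ → L, x i = s ∧ Suff f p n i x = psi i s := by
  intro d
  induction d with
  | zero =>
    intro i _ hd s
    have : i = n := by omega
    subst this
    exact ⟨fun _ => s, rfl, by rw [Suff_self, hpsin]⟩
  | succ d IH =>
    intro i h1 hd s
    have hlt : i < n := by omega
    have hrec := hpsirec i h1 (by omega) s
    obtain ⟨t, -, ht⟩ := Finset.exists_mem_eq_inf' (Finset.univ_nonempty)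
      (fun t : L => psi (i + 1) t + f (i + 1) t + p i s t)
    obtain ⟨x2, hx2i, hx2⟩ := IH (i + 1) (by omega) (by omega) t
    refine ⟨fun k => if k = i then s else x2 k, by simp, ?_⟩
    have hco : Suff f p n (i + 1) (fun k => if k = i then s else x2 k) = Suff f p n (i + 1) x2 :=
      Suff_congr f p (by omega) fun k hk _ => by simp [show k ≠ i from by omega]
    rw [Suff_succ f p hlt]
    simp only [hco, hx2]
    rw [hrec, ht]
    simp [show i + 1 ≠ i from by omega, hx2i]
    ring

end ChainMsg



/-- Min-marginal decomposition on a chain.  Nodes are `1, …, n`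
(a labeling is encoded as `x : Fin n → L`, with `x j = x_{j+1}`); the chain energy is
`F(x) = ∑_{i=1}^{n} f i (x_i) + ∑_{i=1}^{n−1} p i (x_i) (x_{i+1})`.  With left messages `φ`
(`φ 1 = 0`, `φ (i+1) s = min_t (φ i t + f i t + p i t s)`) and right messages `ψ`
(`ψ n = 0`, `ψ i s = min_t (ψ (i+1) t + f (i+1) t + p i s t)`), the min-marginal of `F` at
node `i` and label `s`, i.e. the minimum of `F x` over `x` with `x_i = s`, equals
`f i s + φ i s + ψ i s`. -/
theorem min_marginal_decomposition {L : Type*} [Fintype L] [Nonempty L]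
    (n : ℕ) (hn : 1 ≤ n)
    (f : ℕ → L → ℝ) (p : ℕ → L → L → ℝ) (phi psi : ℕ → L → ℝ)
    (hphi1 : ∀ s : L, phi 1 s = 0)
    (hphirec : ∀ i : ℕ, 1 ≤ i → i ≤ n - 1 → ∀ s : L,
      phi (i + 1) s =
        Finset.univ.inf' Finset.univ_nonempty (fun t : L => phi i t + f i t + p i t s))
    (hpsin : ∀ s : L, psi n s = 0)
    (hpsirec : ∀ i : ℕ, 1 ≤ i → i ≤ n - 1 → ∀ s : L,
      psi i s =
        Finset.univ.inf' Finset.univ_nonempty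
          (fun t : L => psi (i + 1) t + f (i + 1) t + p i s t)) :
    ∀ (i : ℕ) (h1 : 1 ≤ i) (hi : i ≤ n) (s : L),
      IsLeast
        {y : ℝ | ∃ x : Fin n → L, x ⟨i - 1, by omega⟩ = s ∧
          y = (∑ j : Fin n, f (j.val + 1) (x j)) +
              (∑ j : Fin (n - 1), p (j.val + 1) (x ⟨j.val, by omega⟩) (x ⟨j.val + 1, by omega⟩))}
        (f i s + phi i s + psi i s) := by
  intro i h1 hi s
  constructor
  · -- membership: attainment
    obtain ⟨x1, hx1i, hx1⟩ := phi_att n f p phi hphi1 hphirec i h1 hi s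
    obtain ⟨x2, hx2i, hx2⟩ := psi_att n f p psi hpsin hpsirec (n - i) i h1 (by omega) s
    set g : ℕ → L := fun k => if k ≤ i then x1 k else x2 k with hg
    have hgi : g i = s := by simp [hg, hx1i]
    have hgP : Pref f p i g = f i s + phi i s := by
      rw [Pref_congr f p i (x := g) (y := x1) fun k _ hk => by simp [hg, hk]]
      exact hx1
    have hgS : Suff f p n i g = psi i s := by
      rw [Suff_congr f p hi (x := g) (y := x2) ?_]
      · exact hx2
      · intro k hk _
        rcases eq_or_lt_of_le hk with h | h
        · subst h
          simp [hg, hx1i, hx2i]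
        · simp [hg, show ¬ k ≤ i from by omega]
    refine ⟨fun j => g (j.val + 1), ?_, ?_⟩
    · show g (i - 1 + 1) = s
      rw [show i - 1 + 1 = i from by omega, hgi]
    · have e1 : (∑ j : Fin n, f (j.val + 1) (g (j.val + 1)))
          = ∑ j ∈ Finset.range n, f (j + 1) (g (j + 1)) :=
        Fin.sum_univ_eq_sum_range (fun k => f (k + 1) (g (k + 1))) n
      have e2 : (∑ j : Fin (n - 1), p (j.val + 1) (g (j.val + 1)) (g (j.val + 1 + 1)))
          = ∑ j ∈ Finset.range (n - 1), p (j + 1) (g (j + 1)) (g (j + 2)) := by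
        rw [← Fin.sum_univ_eq_sum_range (fun k => p (k + 1) (g (k + 1)) (g (k + 2))) (n - 1)]
      show f i s + phi i s + psi i s =
        (∑ j : Fin n, f (j.val + 1) (g (j.val + 1)))
          + ∑ j : Fin (n - 1), p (j.val + 1) (g (j.val + 1)) (g (j.val + 1 + 1))
      rw [e1, e2, energy_split f p h1 hi g, hgP, hgS]
  · -- lower bound
    rintro y ⟨x, hxs, rfl⟩
    set g : ℕ → L := fun k => x ⟨min (k - 1) (n - 1), by omega⟩ with hg
    have hgx : ∀ (k : ℕ) (hk : k < n), g (k + 1) = x ⟨k, hk⟩ := by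
      intro k hk
      simp only [hg]
      congr 1
      exact Fin.ext (by simp; omega)
    have e1 : (∑ j : Fin n, f (j.val + 1) (x j)) = ∑ j ∈ Finset.range n, f (j + 1) (g (j + 1)) := by
      rw [← Fin.sum_univ_eq_sum_range (fun k => f (k + 1) (g (k + 1))) n]
      exact Finset.sum_congr rfl fun j _ => by rw [hgx j.val j.isLt]
    have e2 : (∑ j : Fin (n - 1), p (j.val + 1) (x ⟨j.val, by omega⟩) (x ⟨j.val + 1, by omega⟩))
        = ∑ j ∈ Finset.range (n - 1), p (j + 1) (g (j + 1)) (g (j + 2)) := by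
      rw [← Fin.sum_univ_eq_sum_range (fun k => p (k + 1) (g (k + 1)) (g (k + 2))) (n - 1)]
      refine Finset.sum_congr rfl fun j _ => ?_
      rw [hgx j.val (by omega), show (j.val + 2) = (j.val + 1) + 1 from by omega,
        hgx (j.val + 1) (by omega)]
    have hgi : g i = s := by
      rw [show i = (i - 1) + 1 from by omega, hgx (i - 1) (by omega)]
      exact hxs
    have hPl := phi_lb n f p phi hphi1 hphirec i h1 hi g
    have hSl := psi_lb n f p psi hpsin hpsirec (n - i) i h1 (by omega) g
    rw [hgi] at hPl hSl
    rw [e1, e2, energy_split f p h1 hi g]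
    linarith
end

section
/- (The TRW-S-type dual update equalizes min-marginals.) Let f, g be energy functions, λ a modular function, and i ∈ V a node. For a label s ∈ L write M^{f+λ}_i(s) for the minimum of f(x) + ⟨λ, x⟩ over labelings x with x i = s, and M^{g−λ}_i(s) for the minimum of g(x) − ⟨λ, x⟩ over such x. Define the updated modular function λ' by λ' j = λ j for j ≠ i and λ' i s = λ i s + (M^{g−λ}_i(s) − M^{f+λ}_i(s))/2. Then for every label s ∈ L, M^{f+λ'}_i(s) = M^{g−λ'}_i(s) = (M^{f+λ}_i(s) + M^{g−λ}_i(s))/2. -/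
/-- The TRW-S-type dual update at node `i` equalizes the min-marginals of the
two slave problems: after the update `λ' i s = λ i s + (M^{g−λ}_i(s) − M^{f+λ}_i(s))/2`
(and `λ' j = λ j` for `j ≠ i`), both min-marginals at `i` equal
`(M^{f+λ}_i(s) + M^{g−λ}_i(s))/2`. -/
theorem trws_update_equalizes_minmarginals {V L : Type*} [Fintype V] [Fintype L]
    [Nonempty V] [Nonempty L]
    (f g : (V → L) → ℝ) (lam lam' : V → L → ℝ) (i : V) (Mf Mg : L → ℝ)
    (hMf : ∀ s : L,
      IsLeast {y : ℝ | ∃ x : V → L, x i = s ∧ y = f x + ∑ j, lam j (x j)} (Mf s))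
    (hMg : ∀ s : L,
      IsLeast {y : ℝ | ∃ x : V → L, x i = s ∧ y = g x - ∑ j, lam j (x j)} (Mg s))
    (hlam'_ne : ∀ j : V, j ≠ i → lam' j = lam j)
    (hlam'_i : ∀ s : L, lam' i s = lam i s + (Mg s - Mf s) / 2) :
    ∀ s : L,
      IsLeast {y : ℝ | ∃ x : V → L, x i = s ∧ y = f x + ∑ j, lam' j (x j)}
        ((Mf s + Mg s) / 2) ∧
      IsLeast {y : ℝ | ∃ x : V → L, x i = s ∧ y = g x - ∑ j, lam' j (x j)}
        ((Mf s + Mg s) / 2) := by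
  intro s
  have key : ∀ x : V → L, x i = s →
      (∑ j, lam' j (x j)) = (∑ j, lam j (x j)) + (Mg s - Mf s) / 2 := by
    intro x hx
    have h1 : (∑ j, lam' j (x j)) - (∑ j, lam j (x j))
        = ∑ j, (lam' j (x j) - lam j (x j)) := by
      rw [Finset.sum_sub_distrib]
    have h2 : (∑ j, (lam' j (x j) - lam j (x j))) = (Mg s - Mf s) / 2 := by
      rw [Finset.sum_eq_single i]
      · rw [hx, hlam'_i s]; ring
      · intro j _ hj; rw [hlam'_ne j hj]; ring
      · intro h; exact absurd (Finset.mem_univ i) h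
    linarith
  obtain ⟨⟨xf, hxf, hxfv⟩, hMfl⟩ := hMf s
  obtain ⟨⟨xg, hxg, hxgv⟩, hMgl⟩ := hMg s
  constructor
  · constructor
    · exact ⟨xf, hxf, by rw [key xf hxf]; linarith⟩
    · rintro y ⟨x, hx, rfl⟩
      have := hMfl ⟨x, hx, rfl⟩
      rw [key x hx]; linarith
  · constructor
    · exact ⟨xg, hxg, by rw [key xg hxg]; linarith⟩
    · rintro y ⟨x, hx, rfl⟩
      have := hMgl ⟨x, hx, rfl⟩
      rw [key x hx]; linarith
end

section
/- (Difference-of-convex decomposition of the truncated penalty.) Let 0 ≤ ε ≤ 1, δ ≥ 0 and C ≥ ε·δ. Then for every t ∈ ℝ, r_{ε,δ}(t) − r_{0, C+δ−εδ}(t) = min(r_{ε,δ}(t), C). In particular the truncated penalty min(r_{ε,δ}, C) is a difference of two convex functions. -/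
/-- The penalty function `r_{α,β}(t) = α|t|` if `|t| ≤ β`, and `|t| − β(1−α)` otherwise. -/
noncomputable def pen (α β t : ℝ) : ℝ := if |t| ≤ β then α * |t| else |t| - β * (1 - α)

lemma pen_eq_max (α β : ℝ) (hα0 : 0 ≤ α) (hα1 : α ≤ 1) (hβ : 0 ≤ β) :
    pen α β = fun t => max (α * |t|) (|t| - β * (1 - α)) := by
  funext t
  unfold pen
  split_ifs with h
  · rw [max_eq_left]; nlinarith [abs_nonneg t]
  · rw [max_eq_right]; nlinarith [abs_nonneg t, le_of_not_ge h]

lemma pen_convex (α β : ℝ) (hα0 : 0 ≤ α) (hα1 : α ≤ 1) (hβ : 0 ≤ β) :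
    ConvexOn ℝ Set.univ (pen α β) := by
  rw [pen_eq_max α β hα0 hα1 hβ]
  have h1 : ConvexOn ℝ Set.univ (fun t : ℝ => α * |t|) := by
    simpa [Real.norm_eq_abs, Pi.smul_apply, smul_eq_mul, funext_iff] using
      (convexOn_univ_norm (E := ℝ)).smul hα0
  have h2 : ConvexOn ℝ Set.univ (fun t : ℝ => |t| - β * (1 - α)) := by
    simpa [Real.norm_eq_abs, sub_eq_add_neg, Pi.add_def] using
      (convexOn_univ_norm (E := ℝ)).add_const (-(β * (1 - α)))
  exact h1.sup h2

/-- Difference-of-convex decomposition of the truncated penalty: for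
`0 ≤ ε ≤ 1`, `δ ≥ 0`, `C ≥ εδ`, we have
`r_{ε,δ}(t) − r_{0, C+δ−εδ}(t) = min(r_{ε,δ}(t), C)`; in particular the truncated penalty
`min(r_{ε,δ}, C)` is a difference of the two convex functions `r_{ε,δ}` and `r_{0,C+δ−εδ}`. -/
theorem truncated_pen_dc (ε δ C : ℝ) (hε0 : 0 ≤ ε) (hε1 : ε ≤ 1) (hδ : 0 ≤ δ)
    (hC : ε * δ ≤ C) :
    (∀ t : ℝ, pen ε δ t - pen 0 (C + δ - ε * δ) t = min (pen ε δ t) C) ∧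
    ConvexOn ℝ Set.univ (pen ε δ) ∧ ConvexOn ℝ Set.univ (pen 0 (C + δ - ε * δ)) := by
  have hβ' : (0:ℝ) ≤ C + δ - ε * δ := by nlinarith
  refine ⟨?_, pen_convex ε δ hε0 hε1 hδ, pen_convex 0 _ le_rfl zero_le_one hβ'⟩
  intro t
  have habs := abs_nonneg t
  unfold pen
  split_ifs with h1 h2 h2 <;>
  · rw [min_def]
    split_ifs <;> nlinarith
end

section
/- (Convex conjugate of the weighted penalty.) Let 0 ≤ α ≤ 1, β ≥ 0 and ω > 0. For t* ∈ ℝ consider the function t ↦ t*·t − ω·r_{α,β}(t) on ℝ. (i) If |t*| ≤ ω, then its supremum over t ∈ ℝ equals max(0, β·|t*| − ω·α·β), and this supremum is attained. (ii) If |t*| > ω, then the function is unbounded above. -/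
lemma pen_le_abs (α β t : ℝ) (hα1 : α ≤ 1) (hβ : 0 ≤ β) : pen α β t ≤ |t| := by
  unfold pen
  split
  · nlinarith [abs_nonneg t]
  · nlinarith

/-- Convex conjugate of the weighted penalty `ω·r_{α,β}`.
(i) If `|t*| ≤ ω`, the supremum of `t ↦ t*·t − ω·r_{α,β}(t)` equals
`max(0, β|t*| − ωαβ)` and is attained; (ii) if `|t*| > ω`, the function is unbounded above. -/
theorem pen_conjugate (α β ω : ℝ) (hα0 : 0 ≤ α) (hα1 : α ≤ 1) (hβ : 0 ≤ β) (hω : 0 < ω)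
    (tstar : ℝ) :
    (|tstar| ≤ ω →
      IsGreatest {y : ℝ | ∃ t : ℝ, y = tstar * t - ω * pen α β t}
        (max 0 (β * |tstar| - ω * α * β))) ∧
    (ω < |tstar| → ¬ BddAbove {y : ℝ | ∃ t : ℝ, y = tstar * t - ω * pen α β t}) := by
  constructor
  · intro hle
    constructor
    · -- membership
      rcases le_or_gt (β * |tstar| - ω * α * β) 0 with hc | hc
      · refine ⟨0, ?_⟩
        rw [max_eq_left hc]
        simp [pen, hβ]
      · rw [max_eq_right hc.le]
        set s : ℝ := if 0 ≤ tstar then 1 else -1 with hs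
        refine ⟨β * s, ?_⟩
        have habs : |β * s| = β := by
          rw [abs_mul, abs_of_nonneg hβ]
          rcases le_or_gt 0 tstar with h | h
          · simp [hs, h]
          · simp [hs, not_le.mpr h]
        have hts : tstar * s = |tstar| := by
          rcases le_or_gt 0 tstar with h | h
          · simp [hs, h, abs_of_nonneg h]
          · simp [hs, h.not_ge, abs_of_neg h]
        have hpen : pen α β (β * s) = α * β := by
          rw [pen, if_pos (le_of_eq habs), habs]
        rw [hpen]
        have : tstar * (β * s) = β * |tstar| := by rw [← hts]; ring
        rw [this]; ring
    · -- upper bound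
      rintro y ⟨t, rfl⟩
      rcases le_or_gt (|t|) β with h | h
      · have h1 : tstar * t - ω * pen α β t = tstar * t - ω * (α * |t|) := by
          rw [pen, if_pos h]
        rw [h1]
        have htt : tstar * t ≤ |tstar| * |t| := by
          calc tstar * t ≤ |tstar * t| := le_abs_self _
            _ = |tstar| * |t| := abs_mul _ _
        rcases le_or_gt (ω * α) (|tstar|) with h2 | h2
        · refine le_max_of_le_right ?_
          nlinarith [abs_nonneg t]
        · refine le_max_of_le_left ?_
          nlinarith [abs_nonneg t]
      · have h1 : tstar * t - ω * pen α β t = tstar * t - ω * (|t| - β * (1 - α)) := by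
          rw [pen, if_neg (not_le.mpr h)]
        rw [h1]
        refine le_max_of_le_right ?_
        have htt : tstar * t ≤ |tstar| * |t| := by
          calc tstar * t ≤ |tstar * t| := le_abs_self _
            _ = |tstar| * |t| := abs_mul _ _
        nlinarith [abs_nonneg t]
  · intro hgt hbdd
    obtain ⟨M, hM⟩ := hbdd
    set c : ℝ := (max M 0 + 1) / (|tstar| - ω) with hc
    have hden : 0 < |tstar| - ω := by linarith
    have hcpos : 0 < c := by positivity
    set s : ℝ := if 0 ≤ tstar then 1 else -1 with hs
    have hts : tstar * s = |tstar| := by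
      rcases le_or_gt 0 tstar with h | h
      · simp [hs, h, abs_of_nonneg h]
      · simp [hs, h.not_ge, abs_of_neg h]
    have habs : |c * s| = c := by
      rw [abs_mul, abs_of_nonneg hcpos.le]
      rcases le_or_gt 0 tstar with h | h
      · simp [hs, h]
      · simp [hs, not_le.mpr h]
    have hmem : tstar * (c * s) - ω * pen α β (c * s) ∈
        {y : ℝ | ∃ t : ℝ, y = tstar * t - ω * pen α β t} := ⟨c * s, rfl⟩
    have hval : M < tstar * (c * s) - ω * pen α β (c * s) := by
      have hpen : pen α β (c * s) ≤ c := by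
        have := pen_le_abs α β (c * s) hα1 hβ
        rwa [habs] at this
      have h2 : tstar * (c * s) = |tstar| * c := by rw [← hts]; ring
      have h3 : (|tstar| - ω) * c = max M 0 + 1 := by
        rw [hc]; field_simp [hden.ne']
      nlinarith [le_max_left M 0]
    exact absurd (hM hmem) (not_le.mpr hval)
end

section
/- (Proximal map of the conjugate penalty.) Let 0 ≤ α ≤ 1, β ≥ 0, ω > 0, σ > 0, and t* ∈ ℝ. Define t' = t* if |t*| ≤ α·ω, and t' = sign(t*)·max(α·ω, |t*| − β·σ) otherwise. Then clamp(−ω, ω, t') is the unique minimizer over y ∈ [−ω, ω] of the strictly convex function y ↦ (1/2)·(y − t*)² + σ·β·max(0, |y| − ω·α). -/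
/-- `clamp a b t` clamps `t` to the interval `[a, b]` (for `a ≤ b`). -/
noncomputable def clamp (a b t : ℝ) : ℝ := max a (min b t)

lemma clamp_of_mem (a b t : ℝ) (h1 : a ≤ t) (h2 : t ≤ b) : clamp a b t = t := by
  unfold clamp; rw [min_eq_right h2, max_eq_right h1]

lemma sub_pos_key (s c g y : ℝ) (hs : 0 ≤ s) (hg0 : 0 ≤ g) (hgs : g ≤ s) :
    g * (y - c) ≤ s * max 0 (|y| - c) := by
  have h1 := le_abs_self y
  have h2 := le_max_right 0 (|y| - c)
  have h3 := le_max_left 0 (|y| - c)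
  nlinarith [mul_le_mul_of_nonneg_left h1 hg0, mul_le_mul_of_nonneg_left h2 hg0,
    mul_le_mul_of_nonneg_right h3 (sub_nonneg.mpr hgs)]

/-- Proximal map of the conjugate penalty.  With
`t' = t*` if `|t*| ≤ αω` and `t' = sign(t*)·max(αω, |t*| − βσ)` otherwise,
`clamp(−ω, ω, t')` is the unique minimizer over `y ∈ [−ω, ω]` of the strictly convex
function `y ↦ ½(y − t*)² + σβ·max(0, |y| − ωα)`. -/
theorem prox_of_conjugate_pen (α β ω σ tstar : ℝ)
    (hα0 : 0 ≤ α) (hα1 : α ≤ 1) (hβ : 0 ≤ β) (hω : 0 < ω) (hσ : 0 < σ) :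
    let t' : ℝ := if |tstar| ≤ α * ω then tstar
      else Real.sign tstar * max (α * ω) (|tstar| - β * σ)
    clamp (-ω) ω t' ∈ Set.Icc (-ω) ω ∧
      ∀ y ∈ Set.Icc (-ω) ω, y ≠ clamp (-ω) ω t' →
        (1 / 2) * (clamp (-ω) ω t' - tstar) ^ 2
            + σ * β * max 0 (|clamp (-ω) ω t'| - ω * α) <
          (1 / 2) * (y - tstar) ^ 2 + σ * β * max 0 (|y| - ω * α) := by
  intro t'
  have hc0 : 0 ≤ α * ω := mul_nonneg hα0 hω.le
  have hcω : α * ω ≤ ω := by nlinarith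
  have hs : 0 ≤ σ * β := mul_nonneg hσ.le hβ
  refine ⟨⟨le_max_left _ _, max_le (by linarith) (min_le_left _ _)⟩, ?_⟩
  suffices H : ∃ g : ℝ,
      (∀ y : ℝ, σ * β * max 0 (|clamp (-ω) ω t'| - ω * α) + g * (y - clamp (-ω) ω t')
          ≤ σ * β * max 0 (|y| - ω * α)) ∧
      (∀ y ∈ Set.Icc (-ω) ω, 0 ≤ (clamp (-ω) ω t' - tstar + g) * (y - clamp (-ω) ω t')) by
    obtain ⟨g, hsub, hvar⟩ := H
    intro y hy hne
    have h3 := hsub y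
    have h4 := hvar y hy
    have h5 : y - clamp (-ω) ω t' ≠ 0 := sub_ne_zero.mpr hne
    have h6 : 0 < (y - clamp (-ω) ω t') ^ 2 := by
      rcases h5.lt_or_gt with h | h <;> nlinarith
    nlinarith [h3, h4, h6]
  have ht'def : t' = if |tstar| ≤ α * ω then tstar
      else Real.sign tstar * max (α * ω) (|tstar| - β * σ) := rfl
  by_cases h : |tstar| ≤ α * ω
  · -- t' = tstar
    have ht' : t' = tstar := by rw [ht'def, if_pos h]
    have hb := abs_le.mp h
    have hclamp : clamp (-ω) ω t' = tstar := by
      rw [ht']; exact clamp_of_mem _ _ _ (by linarith [hb.1]) (by linarith [hb.2])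
    rw [hclamp]
    refine ⟨0, ?_, ?_⟩
    · intro y
      have hm : max 0 (|tstar| - ω * α) = 0 := max_eq_left (by linarith)
      rw [hm]
      have := le_max_left 0 (|y| - ω * α)
      nlinarith
    · intro y _
      have e : (tstar - tstar + 0) * (y - tstar) = 0 := by ring
      rw [e]
  · push_neg at h
    have ht0 : tstar ≠ 0 := by
      intro h0; rw [h0, abs_zero] at h; linarith
    rcases ht0.lt_or_gt with hneg | hpos
    · -- tstar < 0
      have habs : |tstar| = -tstar := abs_of_neg hneg
      have hsign : Real.sign tstar = -1 := Real.sign_of_neg hneg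
      have ht' : t' = -max (α * ω) (-tstar - β * σ) := by
        rw [ht'def, if_neg (not_le.mpr h), hsign, habs]; ring
      by_cases h2 : -tstar - β * σ ≤ α * ω
      · have ht'2 : t' = -(α * ω) := by rw [ht', max_eq_left h2]
        have hclamp : clamp (-ω) ω t' = -(α * ω) := by
          rw [ht'2]; exact clamp_of_mem _ _ _ (by linarith) (by linarith)
        rw [hclamp]
        refine ⟨tstar + α * ω, ?_, ?_⟩
        · intro y
          have ha : |(-(α * ω))| = α * ω := by rw [abs_neg, abs_of_nonneg hc0]
          have hm : max 0 (|(-(α * ω))| - ω * α) = 0 := by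
            rw [ha]; exact max_eq_left (by linarith)
          rw [hm]
          have key := sub_pos_key (σ * β) (ω * α) (-(tstar + α * ω)) (-y) hs
            (by rw [habs] at h; linarith) (by linarith)
          rw [abs_neg] at key
          linarith
        · intro y _
          have e : (-(α * ω) - tstar + (tstar + α * ω)) * (y - -(α * ω)) = 0 := by ring
          rw [e]
      · push_neg at h2
        have ht'2 : t' = -(-tstar - β * σ) := by rw [ht', max_eq_right h2.le]
        by_cases h3 : -tstar - β * σ ≤ ω
        · have hclamp : clamp (-ω) ω t' = -(-tstar - β * σ) := by
            rw [ht'2]; exact clamp_of_mem _ _ _ (by linarith) (by linarith)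
          rw [hclamp]
          refine ⟨-(σ * β), ?_, ?_⟩
          · intro y
            have hxneg : -(-tstar - β * σ) < 0 := by linarith
            have ha : |(-(-tstar - β * σ))| = -tstar - β * σ := by
              rw [abs_of_neg hxneg]; ring
            have hm : max 0 (|(-(-tstar - β * σ))| - ω * α) = -tstar - β * σ - ω * α := by
              rw [ha]; exact max_eq_right (by linarith)
            rw [hm]
            have key := sub_pos_key (σ * β) (ω * α) (σ * β) (-y) hs hs le_rfl
            rw [abs_neg] at key
            linarith
          · intro y _
            have e : (-(-tstar - β * σ) - tstar + -(σ * β)) * (y - -(-tstar - β * σ)) = 0 := by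
              ring
            rw [e]
        · push_neg at h3
          have hclamp : clamp (-ω) ω t' = -ω := by
            unfold clamp
            rw [ht'2]
            rw [min_eq_right (by linarith : -(-tstar - β * σ) ≤ ω),
              max_eq_left (by linarith : -(-tstar - β * σ) ≤ -ω)]
          rw [hclamp]
          refine ⟨-(σ * β), ?_, ?_⟩
          · intro y
            have ha : |(-ω : ℝ)| = ω := by rw [abs_neg, abs_of_nonneg hω.le]
            have hm : max 0 (|(-ω : ℝ)| - ω * α) = ω - ω * α := by
              rw [ha]; exact max_eq_right (by nlinarith)
            rw [hm]
            have key := sub_pos_key (σ * β) (ω * α) (σ * β) (-y) hs hs le_rfl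
            rw [abs_neg] at key
            linarith
          · intro y hy
            have hA : 0 ≤ -ω - tstar + -(σ * β) := by linarith
            have hB : 0 ≤ y - -ω := by linarith [hy.1]
            exact mul_nonneg hA hB
    · -- 0 < tstar
      have habs : |tstar| = tstar := abs_of_pos hpos
      have hsign : Real.sign tstar = 1 := Real.sign_of_pos hpos
      have ht' : t' = max (α * ω) (tstar - β * σ) := by
        rw [ht'def, if_neg (not_le.mpr h), hsign, habs, one_mul]
      by_cases h2 : tstar - β * σ ≤ α * ω
      · have ht'2 : t' = α * ω := by rw [ht', max_eq_left h2]
        have hclamp : clamp (-ω) ω t' = α * ω := by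
          rw [ht'2]; exact clamp_of_mem _ _ _ (by linarith) (by linarith)
        rw [hclamp]
        refine ⟨tstar - α * ω, ?_, ?_⟩
        · intro y
          have hm : max 0 (|α * ω| - ω * α) = 0 := by
            rw [abs_of_nonneg hc0]; exact max_eq_left (by linarith)
          rw [hm]
          have key := sub_pos_key (σ * β) (ω * α) (tstar - α * ω) y hs
            (by rw [habs] at h; linarith) (by linarith)
          linarith
        · intro y _
          have e : (α * ω - tstar + (tstar - α * ω)) * (y - α * ω) = 0 := by ring
          rw [e]
      · push_neg at h2
        have ht'2 : t' = tstar - β * σ := by rw [ht', max_eq_right h2.le]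
        by_cases h3 : tstar - β * σ ≤ ω
        · have hclamp : clamp (-ω) ω t' = tstar - β * σ := by
            rw [ht'2]; exact clamp_of_mem _ _ _ (by linarith) (by linarith)
          rw [hclamp]
          refine ⟨σ * β, ?_, ?_⟩
          · intro y
            have ha : |tstar - β * σ| = tstar - β * σ := abs_of_pos (by linarith)
            have hm : max 0 (|tstar - β * σ| - ω * α) = tstar - β * σ - ω * α := by
              rw [ha]; exact max_eq_right (by linarith)
            rw [hm]
            have key := sub_pos_key (σ * β) (ω * α) (σ * β) y hs hs le_rfl
            linarith
          · intro y _
            have e : (tstar - β * σ - tstar + σ * β) * (y - (tstar - β * σ)) = 0 := by ring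
            rw [e]
        · push_neg at h3
          have hclamp : clamp (-ω) ω t' = ω := by
            unfold clamp
            rw [ht'2]
            rw [min_eq_left (by linarith : (ω : ℝ) ≤ tstar - β * σ),
              max_eq_right (by linarith : -ω ≤ ω)]
          rw [hclamp]
          refine ⟨σ * β, ?_, ?_⟩
          · intro y
            have hm : max 0 (|ω| - ω * α) = ω - ω * α := by
              rw [abs_of_nonneg hω.le]; exact max_eq_right (by nlinarith)
            rw [hm]
            have key := sub_pos_key (σ * β) (ω * α) (σ * β) y hs hs le_rfl
            linarith
          · intro y hy
            have hA : ω - tstar + σ * β ≤ 0 := by linarith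
            have hB : y - ω ≤ 0 := by linarith [hy.2]
            nlinarith
end
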